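/- Let W : ℝ → [0,∞) be continuous, let 0 ≤ a < b ≤ 1, let ε > 0, and let v : [a,b] → ℝ be such that v′ is absolutely continuous with v″ ∈ L²(a,b) and W(v′) ∈ L¹(a,b). Then ∫_a^b (ε⁴ v″(x)² + ε^{−2} W(v′(x))) dx ≥ 2ε |H(v′(b)) − H(v′(a))|, where H(s) = ∫₀^s √(W(r)) dr. -/

import Mathlib

open MeasureTheory Set Filter

/-- `H(s) = ∫₀^s √(W(r)) dr`. -/
noncomputable def Hfun (W : ℝ → ℝ) (s : ℝ) : ℝ := ∫ r in (0:ℝ)..s, Real.sqrt (W r)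

lemma Hfun_piece (W : ℝ → ℝ) (hWc : Continuous W)
    (u : ℝ → ℝ) {x y : ℝ} (hxy : x ≤ y) (hu : ContinuousOn u (Set.Icc x y))
    {C : ℝ} (hC : ∀ t ∈ Set.Icc x y, Real.sqrt (W (u t)) ≤ C) :
    |Hfun W (u y) - Hfun W (u x)| ≤ C * |u y - u x| := by
  have hsq : Continuous fun r => Real.sqrt (W r) := Real.continuous_sqrt.comp hWc
  have h1 : Hfun W (u y) - Hfun W (u x) = ∫ r in u x..u y, Real.sqrt (W r) :=
    intervalIntegral.integral_interval_sub_left (hsq.intervalIntegrable _ _)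
      (hsq.intervalIntegrable _ _)
  rw [h1]
  have hbound : ∀ r ∈ Set.uIoc (u x) (u y), ‖Real.sqrt (W r)‖ ≤ C := by
    intro r hr
    have hr' : r ∈ Set.uIcc (u x) (u y) := Set.uIoc_subset_uIcc hr
    obtain ⟨t, ht, rfl⟩ := intermediate_value_uIcc (by rwa [Set.uIcc_of_le hxy]) hr'
    rw [Set.uIcc_of_le hxy] at ht
    simpa [Real.norm_eq_abs, abs_of_nonneg (Real.sqrt_nonneg _)] using hC t ht
  have := intervalIntegral.norm_integral_le_of_norm_le_const hbound
  simpa [Real.norm_eq_abs] using this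

/-- The Modica–Mortola type lower bound:
`∫_a^b (ε⁴ v″² + ε⁻² W(v′)) dx ≥ 2ε |H(v′(b)) − H(v′(a))|`. -/
theorem statement1
    (W : ℝ → ℝ) (hW_cont : Continuous W) (hW_nonneg : ∀ s, 0 ≤ W s)
    (a b ε : ℝ) (ha : 0 ≤ a) (hab : a < b) (hb : b ≤ 1) (hε : 0 < ε)
    (v v' v'' : ℝ → ℝ)
    (hv'ac : ∀ x ∈ Set.Icc a b, v' x = v' a + ∫ t in a..x, v'' t)
    (hv'int : IntervalIntegrable v' volume a b)
    (hv''int : IntervalIntegrable v'' volume a b)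
    (hv''L2 : IntervalIntegrable (fun x => (v'' x) ^ 2) volume a b)
    (hWL1 : IntervalIntegrable (fun x => W (v' x)) volume a b) :
    2 * ε * |Hfun W (v' b) - Hfun W (v' a)|
      ≤ ∫ x in a..b, (ε ^ 4 * (v'' x) ^ 2 + (ε ^ 2)⁻¹ * W (v' x)) := by
  set g : ℝ → ℝ := fun t => Real.sqrt (W (v' t)) with hg
  -- continuity of v' on [a,b]
  have huc : ContinuousOn v' (Set.Icc a b) := by
    have h1 : ContinuousOn (fun x => v' a + ∫ t in a..x, v'' t) (Set.Icc a b) := by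
      refine continuousOn_const.add ?_
      have hint : IntegrableOn v'' (Set.uIcc a b) volume := by
        rw [Set.uIcc_of_le hab.le, integrableOn_Icc_iff_integrableOn_Ioc]
        exact (intervalIntegrable_iff_integrableOn_Ioc_of_le hab.le).mp hv''int
      have := intervalIntegral.continuousOn_primitive_interval hint
      rwa [Set.uIcc_of_le hab.le] at this
    exact h1.congr hv'ac
  have hgc : ContinuousOn g (Set.Icc a b) :=
    (Real.continuous_sqrt.comp hW_cont).comp_continuousOn huc
  -- integrability facts
  have habs : IntervalIntegrable (fun t => |v'' t|) volume a b := hv''int.abs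
  have hgabs : IntervalIntegrable (fun t => g t * |v'' t|) volume a b :=
    habs.continuousOn_mul (by rwa [Set.uIcc_of_le hab.le])
  set I : ℝ := ∫ t in a..b, g t * |v'' t| with hI
  set K : ℝ := ∫ t in a..b, |v'' t| with hK
  have hK0 : 0 ≤ K :=
    intervalIntegral.integral_nonneg hab.le fun t _ => abs_nonneg _
  -- uniform continuity of g on [a,b]
  have hUC := (isCompact_Icc (a := a) (b := b)).uniformContinuousOn_of_continuous hgc
  rw [Metric.uniformContinuousOn_iff] at hUC
  -- main claim
  have hmain : |Hfun W (v' b) - Hfun W (v' a)| ≤ I := by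
    refine le_of_forall_pos_le_add fun e he => ?_
    set δ : ℝ := e / (2 * (K + 1)) with hδdef
    have hδ : 0 < δ := div_pos he (by linarith)
    obtain ⟨η, hη, hmod⟩ := hUC δ hδ
    obtain ⟨n, hn⟩ := exists_nat_gt ((b - a) / η)
    have hn0 : 0 < (n : ℝ) :=
      lt_of_le_of_lt (div_nonneg (by linarith) hη.le) hn
    set d : ℝ := (b - a) / n with hd_def
    have hd : 0 < d := div_pos (by linarith) hn0
    have hdη : d < η := by
      rw [hd_def, div_lt_iff₀ hn0]
      have := (div_lt_iff₀ hη).mp hn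
      nlinarith
    set X : ℕ → ℝ := fun i => a + i * d with hX
    have hX0 : X 0 = a := by simp [hX]
    have hXn : X n = b := by
      simp only [hX, hd_def]
      field_simp
      ring
    have hXmono : ∀ i : ℕ, X i ≤ X (i + 1) := by
      intro i
      simp only [hX]
      push_cast
      nlinarith
    have hXmem : ∀ i : ℕ, i ≤ n → X i ∈ Set.Icc a b := by
      intro i hi
      constructor
      · simp only [hX]
        nlinarith [hd.le, (Nat.cast_nonneg i : (0:ℝ) ≤ i)]
      · have : X i ≤ X n := by
          simp only [hX]
          have : (i : ℝ) ≤ n := Nat.cast_le.mpr hi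
          nlinarith
        rwa [hXn] at this
    have hgap : ∀ i : ℕ, X (i + 1) - X i = d := by
      intro i; simp only [hX]; push_cast; ring
    -- integrability of the majorant
    have hgd : IntervalIntegrable (fun t => (g t + 2 * δ) * |v'' t|) volume a b :=
      habs.continuousOn_mul (by
        rw [Set.uIcc_of_le hab.le]; exact hgc.add continuousOn_const)
    have hsubuIcc : ∀ i : ℕ, i < n → Set.uIcc (X i) (X (i + 1)) ⊆ Set.uIcc a b := by
      intro i hi
      rw [Set.uIcc_of_le (hXmono i), Set.uIcc_of_le hab.le]
      exact Set.Icc_subset_Icc (hXmem i hi.le).1 (hXmem (i + 1) hi).2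
    -- per-piece bound
    have hpiece : ∀ i : ℕ, i < n →
        |Hfun W (v' (X (i + 1))) - Hfun W (v' (X i))|
          ≤ ∫ t in X i..X (i + 1), (g t + 2 * δ) * |v'' t| := by
      intro i hi
      have hmemi := hXmem i hi.le
      have hmemi1 := hXmem (i + 1) hi
      have hsub : Set.Icc (X i) (X (i + 1)) ⊆ Set.Icc a b :=
        Set.Icc_subset_Icc hmemi.1 hmemi1.2
      have hclose : ∀ t ∈ Set.Icc (X i) (X (i + 1)), |g t - g (X i)| < δ := by
        intro t ht
        have hdist : dist t (X i) < η := by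
          rw [Real.dist_eq, abs_of_nonneg (by linarith [ht.1])]
          have := ht.2
          have := hgap i
          linarith
        exact hmod t (hsub ht) (X i) hmemi hdist
      have hC0 : 0 ≤ g (X i) + δ := add_nonneg (Real.sqrt_nonneg _) hδ.le
      have h1 : |Hfun W (v' (X (i + 1))) - Hfun W (v' (X i))|
          ≤ (g (X i) + δ) * |v' (X (i + 1)) - v' (X i)| := by
        refine Hfun_piece W hW_cont v' (hXmono i) (huc.mono hsub) fun t ht => ?_
        have := (abs_lt.mp (hclose t ht)).1
        have := (abs_lt.mp (hclose t ht)).2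
        simp only [hg] at *
        linarith
      have hint_x : IntervalIntegrable v'' volume a (X i) :=
        hv''int.mono_set (by
          rw [Set.uIcc_of_le hmemi.1, Set.uIcc_of_le hab.le]
          exact Set.Icc_subset_Icc le_rfl hmemi.2)
      have hint_y : IntervalIntegrable v'' volume a (X (i + 1)) :=
        hv''int.mono_set (by
          rw [Set.uIcc_of_le hmemi1.1, Set.uIcc_of_le hab.le]
          exact Set.Icc_subset_Icc le_rfl hmemi1.2)
      have hdiff : v' (X (i + 1)) - v' (X i) = ∫ t in X i..X (i + 1), v'' t := by
        rw [hv'ac _ hmemi1, hv'ac _ hmemi, add_sub_add_left_eq_sub,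
          intervalIntegral.integral_interval_sub_left hint_y hint_x]
      have habs' : |v' (X (i + 1)) - v' (X i)| ≤ ∫ t in X i..X (i + 1), |v'' t| := by
        rw [hdiff]
        exact intervalIntegral.abs_integral_le_integral_abs (hXmono i)
      have h2 : (g (X i) + δ) * |v' (X (i + 1)) - v' (X i)|
          ≤ ∫ t in X i..X (i + 1), (g (X i) + δ) * |v'' t| := by
        rw [intervalIntegral.integral_const_mul]
        exact mul_le_mul_of_nonneg_left habs' hC0
      have h3 : (∫ t in X i..X (i + 1), (g (X i) + δ) * |v'' t|)
          ≤ ∫ t in X i..X (i + 1), (g t + 2 * δ) * |v'' t| := by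
        refine intervalIntegral.integral_mono_on (hXmono i)
          ((habs.mono_set (hsubuIcc i hi)).const_mul _)
          (hgd.mono_set (hsubuIcc i hi)) fun t ht => ?_
        refine mul_le_mul_of_nonneg_right ?_ (abs_nonneg _)
        have := (abs_lt.mp (hclose t ht)).1
        linarith
      linarith
    -- telescope and sum
    have htel : Hfun W (v' b) - Hfun W (v' a)
        = ∑ i ∈ Finset.range n, (Hfun W (v' (X (i + 1))) - Hfun W (v' (X i))) := by
      rw [Finset.sum_range_sub (f := fun i => Hfun W (v' (X i))), hX0, hXn]
    have hsum : |Hfun W (v' b) - Hfun W (v' a)|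
        ≤ ∫ t in a..b, (g t + 2 * δ) * |v'' t| := by
      rw [htel]
      calc |∑ i ∈ Finset.range n, (Hfun W (v' (X (i + 1))) - Hfun W (v' (X i)))|
          ≤ ∑ i ∈ Finset.range n, |Hfun W (v' (X (i + 1))) - Hfun W (v' (X i))| :=
            Finset.abs_sum_le_sum_abs _ _
        _ ≤ ∑ i ∈ Finset.range n, ∫ t in X i..X (i + 1), (g t + 2 * δ) * |v'' t| :=
            Finset.sum_le_sum fun i hi => hpiece i (Finset.mem_range.mp hi)
        _ = ∫ t in (X 0)..(X n), (g t + 2 * δ) * |v'' t| :=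
            intervalIntegral.sum_integral_adjacent_intervals fun k hk =>
              hgd.mono_set (hsubuIcc k hk)
        _ = ∫ t in a..b, (g t + 2 * δ) * |v'' t| := by rw [hX0, hXn]
    have hsplit : (∫ t in a..b, (g t + 2 * δ) * |v'' t|) = I + 2 * δ * K := by
      have : ∀ t, (g t + 2 * δ) * |v'' t| = g t * |v'' t| + 2 * δ * |v'' t| := fun t => by
        ring
      simp only [this]
      rw [intervalIntegral.integral_add hgabs (habs.const_mul _),
        intervalIntegral.integral_const_mul]
    have hfinal : 2 * δ * K ≤ e := by
      have h1 : δ * (2 * (K + 1)) = e := by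
        rw [hδdef]; field_simp
      nlinarith [hδ.le, hK0]
    calc |Hfun W (v' b) - Hfun W (v' a)| ≤ I + 2 * δ * K := by
          rw [← hsplit]; exact hsum
      _ ≤ I + e := by linarith
  -- pointwise Young inequality and conclusion
  have hpt : ∀ t ∈ Set.Icc a b,
      2 * ε * (g t * |v'' t|) ≤ ε ^ 4 * (v'' t) ^ 2 + (ε ^ 2)⁻¹ * W (v' t) := by
    intro t _
    have hs2 : g t ^ 2 = W (v' t) := Real.sq_sqrt (hW_nonneg (v' t))
    have hsn : 0 ≤ g t := Real.sqrt_nonneg _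
    have hc2 : (v'' t) ^ 2 = |v'' t| ^ 2 := (sq_abs _).symm
    rw [← hs2, hc2]
    have h2 : (ε ^ 2)⁻¹ * g t ^ 2 = (ε⁻¹ * g t) ^ 2 := by
      rw [mul_pow, inv_pow]
    have h3 : ε ^ 4 * |v'' t| ^ 2 = (ε ^ 2 * |v'' t|) ^ 2 := by ring
    rw [h2, h3]
    have hAB : (ε ^ 2 * |v'' t|) * (ε⁻¹ * g t) = ε * (g t * |v'' t|) := by
      field_simp
    nlinarith [sq_nonneg (ε ^ 2 * |v'' t| - ε⁻¹ * g t), hAB]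
  have hrhs_int : IntervalIntegrable
      (fun x => ε ^ 4 * (v'' x) ^ 2 + (ε ^ 2)⁻¹ * W (v' x)) volume a b :=
    (hv''L2.const_mul _).add (hWL1.const_mul _)
  calc 2 * ε * |Hfun W (v' b) - Hfun W (v' a)|
      ≤ 2 * ε * I := mul_le_mul_of_nonneg_left hmain (by positivity)
    _ = ∫ t in a..b, 2 * ε * (g t * |v'' t|) := by
        rw [intervalIntegral.integral_const_mul]
    _ ≤ ∫ x in a..b, (ε ^ 4 * (v'' x) ^ 2 + (ε ^ 2)⁻¹ * W (v' x)) :=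
        intervalIntegral.integral_mono_on hab.le (hgabs.const_mul _) hrhs_int hpt
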